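/- An element a of a ring R has a Hirano inverse if and only if a - a³ is nilpotent. -/

import Mathlib

def IsHiranoInverse {R : Type*} [Ring R] (a b : R) : Prop :=
  IsNilpotent (a ^ 2 - a * b) ∧ a * b = b * a ∧ b = b * a * b

/-- Forward direction in a commutative ring. -/
lemma hirano_fwd {S : Type*} [CommRing S] (a b : S)
    (hn : IsNilpotent (a ^ 2 - a * b)) (hb : b = b * a * b) :
    IsNilpotent (a - a ^ 3) := by
  set e := a * b with he_def
  have he : e * e = e := by
    calc (a * b) * (a * b) = a * (b * a * b) := by ring
    _ = a * b := by rw [← hb]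
  -- a*(1-e) is nilpotent since its square is (a^2-e)*(1-e)
  have hsq : (a * (1 - e)) ^ 2 = (a ^ 2 - e) * (1 - e) := by
    linear_combination (a ^ 2 - 1) * he
  have hn' : IsNilpotent (a ^ 2 - e) := by rw [he_def]; exact hn
  have hX2 : IsNilpotent ((a * (1 - e)) ^ 2) := by
    rw [hsq]
    exact (Commute.all _ _).isNilpotent_mul_right hn'
  have hX : IsNilpotent (a * (1 - e)) := by
    obtain ⟨k, hk⟩ := hX2
    exact ⟨2 * k, by rw [pow_mul]; exact hk⟩
  have hY : IsNilpotent (a * (a ^ 2 - e)) :=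
    (Commute.all _ _).isNilpotent_mul_left hn'
  have key : a - a ^ 3 = a * (1 - e) - a * (a ^ 2 - e) := by ring
  rw [key]
  exact (Commute.all _ _).isNilpotent_sub hX hY

/-- Backward direction in a commutative ring. -/
lemma hirano_bwd {S : Type*} [CommRing S] (a : S) (h : IsNilpotent (a - a ^ 3)) :
    ∃ b, IsNilpotent (a ^ 2 - a * b) ∧ a * b = b * a ∧ b = b * a * b := by
  obtain ⟨m0, hm0⟩ := h
  set m := m0 + 1 with hm_def
  have hm : (a - a ^ 3) ^ m = 0 := by rw [hm_def, pow_succ, hm0, zero_mul]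
  set s : S := ∑ i ∈ Finset.range m, (1 - a ^ 2) ^ i with hs_def
  -- geometric sum identity: a^2 * s = 1 - (1-a^2)^m
  have hgeom : a ^ 2 * s = 1 - (1 - a ^ 2) ^ m := by
    have h1 := geom_sum_mul (1 - a ^ 2) m
    rw [← hs_def] at h1
    linear_combination -h1
  -- a^m * (1-a^2)^m = 0
  have hzero : a ^ m * (1 - a ^ 2) ^ m = 0 := by
    rw [← mul_pow]
    have : a * (1 - a ^ 2) = a - a ^ 3 := by ring
    rw [this]; exact hm
  -- single strip: a^(m+2) * s = a^m
  have hstrip : a ^ (m + 2) * s = a ^ m := by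
    have h1 : a ^ (m + 2) * s = a ^ m * (a ^ 2 * s) := by
      rw [pow_add]; ring
    rw [h1, hgeom, mul_sub, mul_one, hzero, sub_zero]
  -- multi strip
  have red : ∀ k c : ℕ, a ^ (m + 2 * k + c) * s ^ k = a ^ (m + c) := by
    intro k
    induction k with
    | zero => intro c; simp
    | succ k ih =>
      intro c
      have h1 : a ^ (m + 2 * (k + 1) + c) * s ^ (k + 1)
          = (a ^ (m + 2) * s) * (a ^ (2 * k + c) * s ^ k) := by
        have e1 : m + 2 * (k + 1) + c = (m + 2) + (2 * k + c) := by ring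
        rw [e1, pow_add, pow_succ]
        ring
      have h2 : a ^ m * (a ^ (2 * k + c) * s ^ k) = a ^ (m + 2 * k + c) * s ^ k := by
        rw [← mul_assoc, ← pow_add]
        ring_nf
      rw [h1, hstrip, h2, ih c]
  refine ⟨a ^ (2 * m + 1) * s ^ (m + 1), ?_, by ring, ?_⟩
  · -- IsNilpotent (a^2 - a * b)
    set b := a ^ (2 * m + 1) * s ^ (m + 1) with hb_def
    set e := a * b with he_def
    have hz : a ^ (2 * m) * e = a ^ (2 * m) := by
      have h1 := red (m + 1) m
      have e1 : m + 2 * (m + 1) + m = (2 * m) + (1 + (2 * m + 1)) := by ring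
      have e2 : m + m = 2 * m := by ring
      rw [e1, e2, pow_add] at h1
      rw [he_def, hb_def]
      calc a ^ (2 * m) * (a * (a ^ (2 * m + 1) * s ^ (m + 1)))
          = a ^ (2 * m) * a ^ (1 + (2 * m + 1)) * s ^ (m + 1) := by
            rw [pow_add]; ring
        _ = a ^ (2 * m) := h1
    have h1e : a ^ (2 * m) * (1 - e) = 0 := by linear_combination -hz
    have hX : (a ^ 2 - a ^ 2 * e) ^ m = 0 := by
      have hb1 : a ^ 2 - a ^ 2 * e = a ^ 2 * (1 - e) := by ring
      rw [hb1, mul_pow, ← pow_mul]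
      rw [hm_def, pow_succ (1 - e)]
      have e3 : 2 * (m0 + 1) = 2 * m := by rw [hm_def]
      rw [e3]
      calc a ^ (2 * m) * ((1 - e) ^ m0 * (1 - e))
          = (a ^ (2 * m) * (1 - e)) * (1 - e) ^ m0 := by ring
        _ = 0 := by rw [h1e, zero_mul]
    have hE0 : e * (1 - a ^ 2) ^ m = 0 := by
      have h1 : e * (1 - a ^ 2) ^ m
          = (a ^ (m + 2) * s ^ (m + 1)) * (a ^ m * (1 - a ^ 2) ^ m) := by
        rw [he_def, hb_def]
        have e1 : (m + 2) + m = 1 + (2 * m + 1) := by ring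
        calc a * (a ^ (2 * m + 1) * s ^ (m + 1)) * (1 - a ^ 2) ^ m
            = a ^ (1 + (2 * m + 1)) * s ^ (m + 1) * (1 - a ^ 2) ^ m := by
              rw [pow_add, pow_one]; ring
          _ = a ^ ((m + 2) + m) * s ^ (m + 1) * (1 - a ^ 2) ^ m := by rw [e1]
          _ = (a ^ (m + 2) * s ^ (m + 1)) * (a ^ m * (1 - a ^ 2) ^ m) := by
              rw [pow_add]; ring
      rw [h1, hzero, mul_zero]
    have hY : (e * (1 - a ^ 2)) ^ m = 0 := by
      rw [mul_pow, hm_def, pow_succ e]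
      calc e ^ m0 * e * (1 - a ^ 2) ^ (m0 + 1)
          = (e * (1 - a ^ 2) ^ (m0 + 1)) * e ^ m0 := by ring
        _ = 0 := by rw [← hm_def, hE0, zero_mul]
    have hsplit : a ^ 2 - a * b = (a ^ 2 - a ^ 2 * e) - e * (1 - a ^ 2) := by
      rw [he_def]; ring
    rw [hsplit]
    exact (Commute.all _ _).isNilpotent_sub ⟨m, hX⟩ ⟨m, hY⟩
  · -- b = b * a * b
    set b := a ^ (2 * m + 1) * s ^ (m + 1) with hb_def
    have h1 := red (m + 1) 0
    have e1 : m + 2 * (m + 1) + 0 = 3 * m + 2 := by ring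
    have e2 : m + 0 = m := by ring
    rw [e1, e2] at h1
    rw [hb_def]
    linear_combination -(a ^ (m + 1) * s ^ (m + 1)) * h1

theorem stmt5 {R : Type*} [Ring R] (a : R) :
    (∃ b, IsHiranoInverse a b) ↔ IsNilpotent (a - a ^ 3) := by
  constructor
  · rintro ⟨b, hn, hc, hb⟩
    let T := Subring.closure {a, b}
    letI : CommRing T := Subring.closureCommRingOfComm (by
      rintro x (rfl | rfl) y (rfl | rfl)
      · rfl
      · exact hc
      · exact hc.symm
      · rfl)
    have haT : a ∈ T := Subring.subset_closure (by left; rfl)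
    have hbT : b ∈ T := Subring.subset_closure (by right; rfl)
    set a' : T := ⟨a, haT⟩ with ha'_def
    set b' : T := ⟨b, hbT⟩ with hb'_def
    have hn' : IsNilpotent (a' ^ 2 - a' * b') := by
      obtain ⟨k, hk⟩ := hn
      exact ⟨k, Subtype.ext (by push_cast; exact hk)⟩
    have hb'' : b' = b' * a' * b' := Subtype.ext (by push_cast; exact hb)
    have := hirano_fwd a' b' hn' hb''
    have h2 := this.map T.subtype
    simpa using h2
  · intro h
    let T := Subring.closure ({a} : Set R)
    letI : CommRing T := Subring.closureCommRingOfComm (by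
      rintro x rfl y rfl; rfl)
    have haT : a ∈ T := Subring.subset_closure rfl
    set a' : T := ⟨a, haT⟩ with ha'_def
    have h' : IsNilpotent (a' - a' ^ 3) := by
      obtain ⟨k, hk⟩ := h
      exact ⟨k, Subtype.ext (by push_cast; exact hk)⟩
    obtain ⟨b', hn', hc', hb'⟩ := hirano_bwd a' h'
    refine ⟨(b' : R), ?_, ?_, ?_⟩
    · have h2 := hn'.map T.subtype
      simpa using h2
    · exact_mod_cast congrArg (T.subtype) hc'
    · exact_mod_cast congrArg (T.subtype) hb'
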